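/- Let A be an associative supercommutative superalgebra and D a ℤ₂-graded left A-module. Then the ℤ₂-graded space Ā = D ⊕ A with product (d₁+a₁)∘(d₂+a₂) = (−1)^{ij} a₂·d₁ + a₁a₂ for homogeneous elements d₁+a₁ ∈ Ā_i, d₂+a₂ ∈ Ā_j is a Novikov superalgebra. -/

import Mathlib

/-- An associative supercommutative superalgebra over ℂ. -/
structure SuperCommAlg (V : Type*) [AddCommGroup V] [Module ℂ V] where
  mul : V →ₗ[ℂ] V →ₗ[ℂ] V
  grading : ZMod 2 → Submodule ℂ V
  spanning : ∀ x : V, ∃ x0 ∈ grading 0, ∃ x1 ∈ grading 1, x = x0 + x1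
  indep : ∀ x : V, x ∈ grading 0 → x ∈ grading 1 → x = 0
  mul_mem : ∀ i j : ZMod 2, ∀ a ∈ grading i, ∀ b ∈ grading j, mul a b ∈ grading (i + j)
  assoc : ∀ x y z : V, mul (mul x y) z = mul x (mul y z)
  scomm : ∀ i j : ZMod 2, ∀ a ∈ grading i, ∀ b ∈ grading j,
    mul a b = ((-1 : ℂ) ^ (i.val * j.val)) • mul b a

/-- A ℤ₂-graded left module over an associative supercommutative superalgebra. -/
structure SuperLeftMod {V : Type*} [AddCommGroup V] [Module ℂ V]
    (S : SuperCommAlg V) (D : Type*) [AddCommGroup D] [Module ℂ D] where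
  act : V →ₗ[ℂ] D →ₗ[ℂ] D
  grading : ZMod 2 → Submodule ℂ D
  spanning : ∀ x : D, ∃ x0 ∈ grading 0, ∃ x1 ∈ grading 1, x = x0 + x1
  indep : ∀ x : D, x ∈ grading 0 → x ∈ grading 1 → x = 0
  act_mem : ∀ i j : ZMod 2, ∀ a ∈ S.grading i, ∀ d ∈ grading j, act a d ∈ grading (i + j)
  act_mul : ∀ a b : V, ∀ d : D, act (S.mul a b) d = act a (act b d)

/-- `Ā = D ⊕ A` with product
`(d₁+a₁)∘(d₂+a₂) = (−1)^{ij} a₂·d₁ + a₁a₂` on homogeneous elements is a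
Novikov superalgebra: the product respects the grading and satisfies the
graded left-symmetry and graded right-commutativity identities. -/
theorem module_extension_is_novikov_super {V : Type*} [AddCommGroup V] [Module ℂ V]
    {D : Type*} [AddCommGroup D] [Module ℂ D]
    (S : SuperCommAlg V) (M : SuperLeftMod S D)
    (p : ZMod 2 → ZMod 2 → D × V → D × V → D × V)
    (hp : ∀ i j : ZMod 2, ∀ x y : D × V,
      p i j x y = (((-1 : ℂ) ^ (i.val * j.val)) • M.act y.2 x.1, S.mul x.2 y.2))
    (Ab : ZMod 2 → Submodule ℂ (D × V))
    (hAb : ∀ i : ZMod 2, Ab i = (M.grading i).prod (S.grading i)) :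
    ∀ i j k : ZMod 2, ∀ u ∈ Ab i, ∀ v ∈ Ab j, ∀ w ∈ Ab k,
      (p i j u v ∈ Ab (i + j)) ∧
      (p (i + j) k (p i j u v) w - p i (j + k) u (p j k v w)
        = ((-1 : ℂ) ^ (i.val * j.val)) •
            (p (j + i) k (p j i v u) w - p j (i + k) v (p i k u w))) ∧
      (p (k + i) j (p k i w u) v = ((-1 : ℂ) ^ (i.val * j.val)) • p (k + j) i (p k j w v) u) := by

  intro i j k u hu v hv w hw
  rw [hAb, Submodule.mem_prod] at hu hv hw
  obtain ⟨hu1, hu2⟩ := hu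
  obtain ⟨hv1, hv2⟩ := hv
  obtain ⟨hw1, hw2⟩ := hw
  have h1 : M.act w.2 (M.act v.2 u.1)
      = ((-1 : ℂ) ^ (k.val * j.val)) • M.act (S.mul v.2 w.2) u.1 := by
    rw [← M.act_mul, S.scomm k j w.2 hw2 v.2 hv2, map_smul, LinearMap.smul_apply]
  have h2 : M.act w.2 (M.act u.2 v.1)
      = ((-1 : ℂ) ^ (k.val * i.val)) • M.act (S.mul u.2 w.2) v.1 := by
    rw [← M.act_mul, S.scomm k i w.2 hw2 u.2 hu2, map_smul, LinearMap.smul_apply]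
  have h3 : M.act v.2 (M.act u.2 w.1)
      = ((-1 : ℂ) ^ (j.val * i.val)) • M.act (S.mul u.2 v.2) w.1 := by
    rw [← M.act_mul, S.scomm j i v.2 hv2 u.2 hu2, map_smul, LinearMap.smul_apply]
  have h4 : M.act u.2 (M.act v.2 w.1) = M.act (S.mul u.2 v.2) w.1 := (M.act_mul _ _ _).symm
  refine ⟨?_, ?_, ?_⟩
  · rw [hp, hAb, Submodule.mem_prod]
    exact ⟨Submodule.smul_mem _ _ (by simpa [add_comm j i] using M.act_mem j i v.2 hv2 u.1 hu1),
      S.mul_mem i j u.2 hu2 v.2 hv2⟩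
  · simp only [hp, Prod.smul_mk, Prod.mk_sub_mk, Prod.mk.injEq]
    constructor
    · rw [map_smul, h1, map_smul, h2]
      match_scalars <;> fin_cases i <;> fin_cases j <;> fin_cases k <;> norm_num [show (2:ZMod 2).val = 0 from rfl, show (1:ZMod 2).val = 1 from rfl, show (0:ZMod 2).val = 0 from rfl] <;> simp +decide [ZMod.val, Fin.add_def] <;> norm_num
    · rw [S.assoc, S.assoc, sub_self, sub_self, smul_zero]
  · simp only [hp, Prod.smul_mk, Prod.mk.injEq]
    constructor
    · rw [map_smul, h3, map_smul, h4]
      match_scalars <;> fin_cases i <;> fin_cases j <;> fin_cases k <;> norm_num [show (2:ZMod 2).val = 0 from rfl, show (1:ZMod 2).val = 1 from rfl, show (0:ZMod 2).val = 0 from rfl] <;> simp +decide [ZMod.val, Fin.add_def] <;> norm_num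
    · rw [S.assoc, S.assoc, S.scomm i j u.2 hu2 v.2 hv2, map_smul]
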